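/- arXiv:2001.06536 — 2 statements merged into one kernel-verified Lean document; each statement's English description precedes it below -/
import Mathlib

section
/- For any satisfiable CNF formula F over n variables with exactly S ≥ 1 solutions, there exists a partial assignment a to a set of exactly ⌈log₂ S⌉ variables such that F restricted by a has exactly one solution. -/
open scoped Classical

abbrev Clause (V : Type) : Type := List (V × Bool)

abbrev CNF (V : Type) : Type := List (Clause V)

def Sat {V : Type} (F : CNF V) (α : V → Bool) : Prop :=
  ∀ C ∈ F, ∃ l ∈ C, α l.1 = l.2

noncomputable def numSol {V : Type} (F : CNF V) : ℕ :=
  Nat.card {α : V → Bool // Sat F α}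

noncomputable def cnt {V : Type} [Fintype V] (F : CNF V) (A : Finset V) (b : V → Bool) : ℕ :=
  (Finset.univ.filter (fun α : V → Bool => Sat F α ∧ ∀ v ∈ A, α v = b v)).card

lemma cnt_insert {V : Type} [Fintype V] (F : CNF V) (A : Finset V) (b : V → Bool)
    {v : V} (hv : v ∉ A) (c : Bool) :
    cnt F (insert v A) (Function.update b v c) =
      (Finset.univ.filter (fun α : V → Bool =>
        (Sat F α ∧ ∀ w ∈ A, α w = b w) ∧ α v = c)).card := by
  unfold cnt
  congr 1
  apply Finset.filter_congr
  intro α _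
  simp only [Finset.mem_insert]
  constructor
  · rintro ⟨hs, h⟩
    refine ⟨⟨hs, fun w hw => ?_⟩, ?_⟩
    · have := h w (Or.inr hw)
      rwa [Function.update_of_ne (by rintro rfl; exact hv hw)] at this
    · have := h v (Or.inl rfl)
      rwa [Function.update_self] at this
  · rintro ⟨⟨hs, h⟩, hc⟩
    refine ⟨hs, fun w hw => ?_⟩
    rcases hw with rfl | hw
    · rw [Function.update_self]; exact hc
    · rw [Function.update_of_ne (by rintro rfl; exact hv hw)]; exact h w hw

lemma cnt_split {V : Type} [Fintype V] (F : CNF V) (A : Finset V) (b : V → Bool)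
    {v : V} (hv : v ∉ A) :
    cnt F (insert v A) (Function.update b v true) +
      cnt F (insert v A) (Function.update b v false) = cnt F A b := by
  rw [cnt_insert F A b hv true, cnt_insert F A b hv false]
  unfold cnt
  have hre : (Finset.univ.filter (fun α : V → Bool =>
        (Sat F α ∧ ∀ w ∈ A, α w = b w) ∧ α v = false)).card
      = (Finset.univ.filter (fun α : V → Bool =>
        (Sat F α ∧ ∀ w ∈ A, α w = b w) ∧ ¬ (α v = true))).card := by
    congr 1
    apply Finset.filter_congr
    intro α _
    simp
  rw [hre]
  have h := Finset.card_filter_add_card_filter_not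
    (s := Finset.univ.filter (fun α : V → Bool => Sat F α ∧ ∀ w ∈ A, α w = b w))
    (p := fun α : V → Bool => α v = true)
  rw [Finset.filter_filter, Finset.filter_filter] at h
  exact h

lemma key {V : Type} [Fintype V] (F : CNF V) :
    ∀ (k : ℕ) (A : Finset V) (b : V → Bool),
      1 ≤ cnt F A b → cnt F A b ≤ 2 ^ k → A.card + k ≤ Fintype.card V →
      ∃ (A' : Finset V) (b' : V → Bool), A'.card = A.card + k ∧ cnt F A' b' = 1 := by
  intro k
  induction k with
  | zero =>
    intro A b h1 h2 _
    exact ⟨A, b, by omega, by omega⟩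
  | succ k ih =>
    intro A b h1 h2 hcard
    -- find v ∉ A
    have hA : A.card < Fintype.card V := by omega
    obtain ⟨v, hv⟩ : ∃ v, v ∉ A := by
      by_contra h
      push_neg at h
      have : A = Finset.univ := Finset.eq_univ_iff_forall.mpr h
      rw [this, Finset.card_univ] at hA; omega
    by_cases h2' : 2 ≤ cnt F A b
    · have hlt : 1 < cnt F A b := by omega
      unfold cnt at hlt
      obtain ⟨α, hα, β, hβ, hne⟩ := Finset.one_lt_card.mp hlt
      clear hlt
      obtain ⟨w, hw⟩ : ∃ w, α w ≠ β w := by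
        by_contra h; push_neg at h; exact hne (funext h)
      simp only [Finset.mem_filter] at hα hβ
      have hwA : w ∉ A := fun hwA => hw ((hα.2.2 w hwA).trans (hβ.2.2 w hwA).symm)
      have hsplit := cnt_split F A b hwA
      -- both sides ≥ 1
      have mem1 : ∀ (γ : V → Bool), Sat F γ → (∀ u ∈ A, γ u = b u) →
          1 ≤ cnt F (insert w A) (Function.update b w (γ w)) := by
        intro γ hs hc
        rw [cnt_insert F A b hwA (γ w)]
        apply Finset.card_pos.mpr
        exact ⟨γ, Finset.mem_filter.mpr ⟨Finset.mem_univ _, ⟨hs, hc⟩, rfl⟩⟩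
      have ha1 : 1 ≤ cnt F (insert w A) (Function.update b w (α w)) :=
        mem1 α hα.2.1 hα.2.2
      have hb1 : 1 ≤ cnt F (insert w A) (Function.update b w (β w)) :=
        mem1 β hβ.2.1 hβ.2.2
      have hcases : cnt F (insert w A) (Function.update b w true) ≤ 2 ^ k ∨
          cnt F (insert w A) (Function.update b w false) ≤ 2 ^ k := by
        by_contra h; push_neg at h
        have : 2 ^ (k + 1) = 2 ^ k + 2 ^ k := by ring
        omega
      have hboth : 1 ≤ cnt F (insert w A) (Function.update b w true) ∧
          1 ≤ cnt F (insert w A) (Function.update b w false) := by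
        rcases Bool.eq_false_or_eq_true (α w) with h | h <;>
          rcases Bool.eq_false_or_eq_true (β w) with h' | h' <;>
          rw [h] at ha1 <;> rw [h'] at hb1 <;>
          first
            | exact absurd (h.trans h'.symm) hw
            | exact ⟨ha1, hb1⟩
            | exact ⟨hb1, ha1⟩
      have hcardins : (insert w A).card = A.card + 1 := Finset.card_insert_of_notMem hwA
      rcases hcases with hle | hle
      · obtain ⟨A', b', hc1, hc2⟩ := ih (insert w A) (Function.update b w true)
          hboth.1 hle (by omega)
        exact ⟨A', b', by omega, hc2⟩
      · obtain ⟨A', b', hc1, hc2⟩ := ih (insert w A) (Function.update b w false)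
          hboth.2 hle (by omega)
        exact ⟨A', b', by omega, hc2⟩
    · -- cnt = 1, pad
      have hone : cnt F A b = 1 := by omega
      obtain ⟨α, hα⟩ := Finset.card_eq_one.mp hone
      have hαmem : α ∈ Finset.univ.filter
          (fun α : V → Bool => Sat F α ∧ ∀ w ∈ A, α w = b w) := hα ▸ Finset.mem_singleton_self α
      simp only [Finset.mem_filter] at hαmem
      have hnew : cnt F (insert v A) (Function.update b v (α v)) = 1 := by
        rw [cnt_insert F A b hv (α v)]
        apply Finset.card_eq_one.mpr
        refine ⟨α, ?_⟩
        ext γ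
        simp only [Finset.mem_filter, Finset.mem_univ, true_and, Finset.mem_singleton]
        constructor
        · rintro ⟨hP, _⟩
          have : γ ∈ Finset.univ.filter
              (fun α : V → Bool => Sat F α ∧ ∀ w ∈ A, α w = b w) :=
            Finset.mem_filter.mpr ⟨Finset.mem_univ _, hP⟩
          rw [hα, Finset.mem_singleton] at this; exact this
        · rintro rfl; exact ⟨hαmem.2, rfl⟩
      obtain ⟨A', b', hc1, hc2⟩ := ih (insert v A) (Function.update b v (α v))
        (by omega) (by have := Nat.one_le_two_pow (n := k); omega)
        (by rw [Finset.card_insert_of_notMem hv]; omega)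
      exact ⟨A', b', by rw [hc1, Finset.card_insert_of_notMem hv]; omega, hc2⟩

lemma numSol_eq_cnt {V : Type} [Fintype V] (F : CNF V) (b : V → Bool) :
    numSol F = cnt F ∅ b := by
  unfold numSol cnt
  rw [Nat.card_eq_fintype_card, Fintype.card_subtype]
  congr 1
  apply Finset.filter_congr
  intro α _
  simp

/-- For any satisfiable CNF `F` with `S ≥ 1` solutions there is a partial assignment `a`
(given by a set `A` of exactly `⌈log₂ S⌉` variables together with values `b`)
such that `F` restricted by `a` has exactly one solution, i.e. there is exactly one
solution of `F` extending `a`. -/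
theorem stmt2 (V : Type) [Fintype V] (F : CNF V) (hS : 1 ≤ numSol F) :
    ∃ (A : Finset V) (b : V → Bool),
      A.card = Nat.clog 2 (numSol F) ∧
      ∃! α : V → Bool, Sat F α ∧ ∀ v ∈ A, α v = b v := by
  set S := numSol F with hSdef
  have hcnt : cnt F ∅ (fun _ => true) = S := (numSol_eq_cnt F _).symm
  have hSle : S ≤ 2 ^ Fintype.card V := by
    have : S ≤ Nat.card (V → Bool) :=
      Nat.card_le_card_of_injective _ Subtype.val_injective
    rwa [Nat.card_eq_fintype_card, Fintype.card_fun, Fintype.card_bool] at this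
  have hclog : Nat.clog 2 S ≤ Fintype.card V :=
    (Nat.clog_le_iff_le_pow one_lt_two).mpr hSle
  obtain ⟨A, b, hc1, hc2⟩ := key F (Nat.clog 2 S) ∅ (fun _ => true)
    (by omega) (by rw [hcnt]; exact Nat.le_pow_clog one_lt_two _)
    (by simpa using hclog)
  refine ⟨A, b, by simpa using hc1, ?_⟩
  obtain ⟨α, hα⟩ := Finset.card_eq_one.mp hc2
  have hmem : ∀ γ : V → Bool, (Sat F γ ∧ ∀ v ∈ A, γ v = b v) ↔ γ = α := by
    intro γ
    rw [← Finset.mem_singleton, ← hα, Finset.mem_filter]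
    simp
  exact ⟨α, (hmem α).mpr rfl, fun γ hγ => (hmem γ).mp hγ⟩
end

section
/- Consider a rooted tree of uniform depth d ≥ 1 in which every internal vertex has at most k-1 children (k ≥ 2), and labels on vertices such that no vertex shares its label with any of its proper ancestors. Assign each label independently a uniform random placement in [n]. For r ∈ [n] and j ∈ [0,d], let φ_j(r) be the probability that a subtree of depth j rooted at a vertex with label y admits a cut A (a set of vertices not containing the subtree root such that every root-to-leaf path meets A exactly once) all of whose labels have placement at most r. Then φ_j(r) ≥ (r/n + (1 - r/n)·φ_{j-1}(r))^(k-1) with φ_0(r) = 0. -/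
/-- Finite rooted labeled trees with labels in `L`. -/
inductive LTree (L : Type) where
  | node : L → List (LTree L) → LTree L

namespace LTree

/-- The label of the root. -/
def labelOf {L : Type} : LTree L → L
  | node y _ => y

/-- The list of child subtrees of the root. -/
def childrenOf {L : Type} : LTree L → List (LTree L)
  | node _ cs => cs

/-- Every vertex has at most `b` children. -/
def branchBound {L : Type} (b : ℕ) : LTree L → Prop
  | node _ cs => cs.length ≤ b ∧ ∀ c ∈ cs.attach, branchBound b c.1
decreasing_by
  simp only [LTree.node.sizeOf_spec]
  have := List.sizeOf_lt_of_mem c.2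
  omega

/-- Every leaf is at depth exactly `d` (the root has depth `0`). -/
def uniformDepth {L : Type} : ℕ → LTree L → Prop
  | 0, node _ cs => cs = []
  | d + 1, node _ cs => cs ≠ [] ∧ ∀ c ∈ cs.attach, uniformDepth d c.1
decreasing_by
  simp only [LTree.node.sizeOf_spec]
  have := List.sizeOf_lt_of_mem c.2
  omega

/-- No vertex shares its label with any of its proper ancestors (starting with the
forbidden set `seen`). -/
def pathDistinct {L : Type} (seen : Finset L) [DecidableEq L] : LTree L → Prop
  | node y cs => y ∉ seen ∧ ∀ c ∈ cs.attach, pathDistinct (insert y seen) c.1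
decreasing_by
  simp only [LTree.node.sizeOf_spec]
  have := List.sizeOf_lt_of_mem c.2
  omega

/-- The tree admits a cut all of whose vertices have labels in `S`: a set of vertices not
containing the root such that every root-to-leaf path meets it exactly once.  Equivalently
(recursively): the root has at least one child, and for each child either its label is in
`S` or its subtree admits such a cut. -/
def hasCut {L : Type} [DecidableEq L] (S : Finset L) : LTree L → Prop
  | node _ cs => cs ≠ [] ∧ ∀ c ∈ cs.attach, (labelOf c.1 ∈ S ∨ hasCut S c.1)
decreasing_by
  simp only [LTree.node.sizeOf_spec]
  have := List.sizeOf_lt_of_mem c.2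
  omega

end LTree

namespace LTree
variable {L : Type} [DecidableEq L]

theorem hasCut_mono {S S' : Finset L} (hSS : S ⊆ S') :
    (T : LTree L) → hasCut S T → hasCut S' T
  | node y cs, h => by
    rw [hasCut] at h ⊢
    exact ⟨h.1, fun c hc => (h.2 c hc).elim (fun h' => Or.inl (hSS h'))
      (fun h' => Or.inr (hasCut_mono hSS c.1 h'))⟩
decreasing_by
  simp only [LTree.node.sizeOf_spec]
  have := List.sizeOf_lt_of_mem c.2
  omega

theorem labelOf_not_mem {seen : Finset L} {T : LTree L} (h : pathDistinct seen T) :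
    labelOf T ∉ seen := by
  obtain ⟨y, cs⟩ := T
  rw [pathDistinct] at h
  exact h.1

theorem hasCut_congr {S S' : Finset L} {x : L} (hx : ∀ z, z ≠ x → (z ∈ S ↔ z ∈ S')) :
    (T : LTree L) → (seen : Finset L) → pathDistinct seen T → x ∈ insert (labelOf T) seen →
    (hasCut S T ↔ hasCut S' T)
  | node y cs, seen, hpd, hxm => by
    rw [pathDistinct] at hpd
    rw [hasCut, hasCut]
    refine and_congr_right fun _ => forall_congr' fun c => forall_congr' fun hc => ?_
    have hpc := hpd.2 c hc
    have hlab : labelOf c.1 ∉ insert y seen := labelOf_not_mem hpc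
    have hxy : x ∈ insert y seen := by simpa [labelOf] using hxm
    have hne : labelOf c.1 ≠ x := fun h => hlab (h ▸ hxy)
    exact or_congr (hx _ hne)
      (hasCut_congr hx c.1 (insert y seen) hpc (Finset.mem_insert_of_mem hxy))
decreasing_by
  simp only [LTree.node.sizeOf_spec]
  have := List.sizeOf_lt_of_mem c.2
  omega

end LTree

/-- The set of labels whose placement (in `[n] = {1,…,n}`, encoded by `Fin n` via `+1`)
is at most `r`, under the placement assignment `γ`. -/
def smallLabels {L : Type} [Fintype L] [DecidableEq L] {n : ℕ} (γ : L → Fin n) (r : ℕ) :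
    Finset L :=
  Finset.univ.filter (fun x => (γ x : ℕ) + 1 ≤ r)

/-- The probability, over independent uniform placements `γ : L → [n]` of the labels, that
the tree `T` admits a cut all of whose labels have placement at most `r`. -/
noncomputable def cutProb {L : Type} [Fintype L] [DecidableEq L] (n : ℕ) (r : ℕ)
    (T : LTree L) : ℝ :=
  (Nat.card {γ : L → Fin n // LTree.hasCut (smallLabels γ r) T} : ℝ) /
    (n ^ Fintype.card L : ℝ)

open Finset

theorem count_indep {L : Type} [DecidableEq L] [Fintype L] {n : ℕ}
    (E : (L → Fin n) → Prop) [DecidablePred E] (x : L)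
    (hE : ∀ γ v, E (Function.update γ x v) ↔ E γ)
    (P : Fin n → Prop) [DecidablePred P] :
    #(univ.filter (fun γ => E γ ∧ P (γ x))) * n =
      #(univ.filter E) * #(univ.filter P) := by
  classical
  have key : #((univ.filter (fun γ => E γ ∧ P (γ x))) ×ˢ (univ : Finset (Fin n))) =
      #((univ.filter E) ×ˢ (univ.filter P)) := by
    refine card_bij' (fun p _ => (Function.update p.1 x p.2, p.1 x))
      (fun q _ => (Function.update q.1 x q.2, q.1 x)) ?_ ?_ ?_ ?_
    · rintro ⟨γ, v⟩ hp
      simp only [mem_product, mem_filter, mem_univ, true_and] at hp ⊢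
      exact ⟨(hE γ v).mpr hp.1.1, hp.1.2⟩
    · rintro ⟨δ, b⟩ hq
      simp only [mem_product, mem_filter, mem_univ, true_and, and_true] at hq ⊢
      exact ⟨(hE δ b).mpr hq.1, by simpa using hq.2⟩
    · rintro ⟨γ, v⟩ _
      simp [Function.update_idem]
    · rintro ⟨δ, b⟩ _
      simp [Function.update_idem]
  simpa [card_product] using key

theorem harris {L : Type} [DecidableEq L] [Fintype L] {n : ℕ}
    (E F : (L → Fin n) → Prop) [DecidablePred E] [DecidablePred F]
    (hE : ∀ γ γ', γ ≤ γ' → E γ' → E γ) (hF : ∀ γ γ', γ ≤ γ' → F γ' → F γ) :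
    (#(univ.filter E) : ℝ) * #(univ.filter F) ≤
      #(univ.filter (fun γ => E γ ∧ F γ)) * n ^ Fintype.card L := by
  classical
  set α := (L → Fin n)ᵒᵈ
  have key := fkg (α := α) (β := ℝ)
    (f := fun a => if E (OrderDual.ofDual a) then 1 else 0)
    (g := fun a => if F (OrderDual.ofDual a) then 1 else 0)
    (μ := fun _ => 1)
    (fun _ => zero_le_one)
    (fun a => by dsimp; split <;> norm_num)
    (fun a => by dsimp; split <;> norm_num)
    (fun a b hab => by
      dsimp; split
      · have hb : E (OrderDual.ofDual b) := hE _ _ hab ‹_›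
        rw [if_pos hb]
      · split <;> norm_num)
    (fun a b hab => by
      dsimp; split
      · have hb : F (OrderDual.ofDual b) := hF _ _ hab ‹_›
        rw [if_pos hb]
      · split <;> norm_num)
    (fun a b => le_rfl)
  simp only [one_mul] at key
  have e1 : (∑ a : α, if E (OrderDual.ofDual a) then (1:ℝ) else 0) = #(univ.filter E) := by
    rw [Finset.sum_boole]
    rfl
  have e2 : (∑ a : α, if F (OrderDual.ofDual a) then (1:ℝ) else 0) = #(univ.filter F) := by
    rw [Finset.sum_boole]
    rfl
  have e3 : (∑ a : α, (if E (OrderDual.ofDual a) then (1:ℝ) else 0) *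
      (if F (OrderDual.ofDual a) then 1 else 0)) =
      #(univ.filter (fun γ => E γ ∧ F γ)) := by
    rw [show (fun a : α => (if E (OrderDual.ofDual a) then (1:ℝ) else 0) *
        (if F (OrderDual.ofDual a) then 1 else 0)) =
        (fun a : α => if E (OrderDual.ofDual a) ∧ F (OrderDual.ofDual a) then (1:ℝ) else 0)
      from funext fun a => by split_ifs <;> simp_all]
    rw [Finset.sum_boole]
    rfl
  have e4 : (∑ _a : α, (1:ℝ)) = n ^ Fintype.card L := by
    simp [α, Fintype.card_fun]
  rw [e1, e2, e3, e4] at key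
  linarith

theorem harris_pr {L : Type} [DecidableEq L] [Fintype L] {n : ℕ} (hn : 0 < n)
    (E F : (L → Fin n) → Prop) [DecidablePred E] [DecidablePred F]
    (hE : ∀ γ γ', γ ≤ γ' → E γ' → E γ) (hF : ∀ γ γ', γ ≤ γ' → F γ' → F γ) :
    ((#(univ.filter E) : ℝ) / (n : ℝ) ^ Fintype.card L) *
      ((#(univ.filter F) : ℝ) / (n : ℝ) ^ Fintype.card L) ≤
      (#(univ.filter (fun γ => E γ ∧ F γ)) : ℝ) / (n : ℝ) ^ Fintype.card L := by
  have h := harris E F hE hF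
  have hN : (0:ℝ) < (n : ℝ) ^ Fintype.card L := by positivity
  rw [div_mul_div_comm, div_le_div_iff₀ (by positivity) hN]
  nlinarith [mul_le_mul_of_nonneg_right h hN.le]

/-- The recurrence `φ_j(r) ≥ (r/n + (1 - r/n)·φ_{j-1}(r))^(k-1)`: if every depth-`(j-1)`
child subtree admits a suitable cut with probability at least `φprev`, then the whole
depth-`j` tree does so with probability at least `(r/n + (1 - r/n)·φprev)^(k-1)`. -/
theorem stmt11 (L : Type) [Fintype L] [DecidableEq L] (k n r j : ℕ)
    (hk : 2 ≤ k) (hn : 0 < n) (hr1 : 1 ≤ r) (hrn : r ≤ n) (hj : 1 ≤ j)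
    (T : LTree L)
    (hdepth : T.uniformDepth j)
    (hbr : T.branchBound (k - 1))
    (hpd : T.pathDistinct ∅)
    (φprev : ℝ) (hφ0 : 0 ≤ φprev) (hφ1 : φprev ≤ 1)
    (hchild : ∀ c ∈ T.childrenOf, φprev ≤ cutProb n r c) :
    ((r : ℝ) / n + (1 - (r : ℝ) / n) * φprev) ^ (k - 1) ≤ cutProb n r T := by
  classical
  obtain ⟨y, cs⟩ := T
  set m := Fintype.card L with hm
  have hn' : (0:ℝ) < n := by exact_mod_cast hn
  have hN : (0:ℝ) < (n:ℝ)^m := by positivity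
  set p : ℝ := (r:ℝ)/n with hp
  have hp0 : 0 ≤ p := by positivity
  have hp1 : p ≤ 1 := by rw [hp, div_le_one hn']; exact_mod_cast hrn
  set xval : ℝ := p + (1-p)*φprev with hxval
  have hx0 : 0 ≤ xval := by nlinarith
  have hx1 : xval ≤ 1 := by nlinarith
  obtain ⟨j', rfl⟩ : ∃ j', j = j' + 1 := ⟨j-1, by omega⟩
  rw [LTree.uniformDepth] at hdepth
  have hne : cs ≠ [] := hdepth.1
  rw [LTree.branchBound] at hbr
  have hlen : cs.length ≤ k - 1 := hbr.1
  rw [LTree.pathDistinct] at hpd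
  simp only [LTree.childrenOf] at hchild
  set Qc : LTree L → (L → Fin n) → Prop :=
    fun c γ => LTree.labelOf c ∈ smallLabels γ r ∨ LTree.hasCut (smallLabels γ r) c with hQc
  have hanti : ∀ γ γ' : L → Fin n, γ ≤ γ' → smallLabels γ' r ⊆ smallLabels γ r := by
    intro γ γ' hle z hz
    simp only [smallLabels, mem_filter, mem_univ, true_and] at hz ⊢
    have h2 := Fin.le_def.mp (hle z)
    omega
  have hQdec : ∀ c, ∀ γ γ' : L → Fin n, γ ≤ γ' → Qc c γ' → Qc c γ := by
    intro c γ γ' hle h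
    rcases h with h | h
    · exact Or.inl (hanti γ γ' hle h)
    · exact Or.inr (LTree.hasCut_mono (hanti γ γ' hle) c h)
  have hcut_eq : ∀ T' : LTree L, cutProb n r T' =
      (#(univ.filter (fun γ : L → Fin n => LTree.hasCut (smallLabels γ r) T')) : ℝ) / (n:ℝ)^m := by
    intro T'
    rw [cutProb, Nat.card_eq_fintype_card, Fintype.card_subtype]
  -- event equivalence at the root
  have hev : ∀ γ : L → Fin n,
      LTree.hasCut (smallLabels γ r) (LTree.node y cs) ↔ ∀ c ∈ cs, Qc c γ := by
    intro γ
    rw [LTree.hasCut]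
    constructor
    · intro h c hc; exact h.2 ⟨c, hc⟩ (List.mem_attach _ _)
    · intro h; exact ⟨hne, fun c _ => h c.1 c.2⟩
  -- cardinality of small placements
  have hcr : #(univ.filter (fun v : Fin n => (v:ℕ)+1 ≤ r)) = r := by
    have hmap : (univ.filter (fun v : Fin n => (v:ℕ)+1 ≤ r)).map
        ⟨Fin.val, Fin.val_injective⟩ = Finset.range r := by
      ext a
      simp only [mem_map, mem_filter, mem_univ, true_and, Function.Embedding.coeFn_mk,
        mem_range]
      constructor
      · rintro ⟨v, hv, rfl⟩; omega
      · intro ha; exact ⟨⟨a, lt_of_lt_of_le ha hrn⟩, by simp; omega, rfl⟩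
    have := congrArg Finset.card hmap
    simpa using this
  have hcnr : #(univ.filter (fun v : Fin n => ¬((v:ℕ)+1 ≤ r))) = n - r := by
    rw [Finset.filter_not, Finset.card_sdiff_of_subset (filter_subset _ _), hcr, card_univ,
      Fintype.card_fin]
  -- per-child probability bound
  have hchildQ : ∀ c ∈ cs, xval ≤ (#(univ.filter (Qc c)) : ℝ) / (n:ℝ)^m := by
    intro c hc
    set x := LTree.labelOf c with hx
    have hpc : LTree.pathDistinct (insert y ∅) c := hpd.2 ⟨c, hc⟩ (List.mem_attach _ _)
    have hindep : ∀ (γ : L → Fin n) (v : Fin n),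
        LTree.hasCut (smallLabels (Function.update γ x v) r) c ↔
          LTree.hasCut (smallLabels γ r) c := by
      intro γ v
      refine LTree.hasCut_congr (fun z hz => ?_) c (insert y ∅) hpc
        (Finset.mem_insert_self _ _)
      simp [smallLabels, Function.update_of_ne (show z ≠ x from hz)]
    have h1 := count_indep (fun _ : L → Fin n => True) x (fun _ _ => Iff.rfl)
        (fun v : Fin n => (v:ℕ) + 1 ≤ r)
    have h2 := count_indep (fun γ : L → Fin n => LTree.hasCut (smallLabels γ r) c) x hindep
        (fun v : Fin n => ¬((v:ℕ) + 1 ≤ r))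
    rw [hcr] at h1
    rw [hcnr] at h2
    rw [show (univ.filter (fun _ : L → Fin n => True)) = univ by simp, card_univ,
      Fintype.card_fun, Fintype.card_fin] at h1
    have hsplit : #(univ.filter (Qc c)) =
        #(univ.filter (fun γ : L → Fin n => True ∧ ((γ x : ℕ)+1 ≤ r))) +
        #(univ.filter (fun γ : L → Fin n =>
          LTree.hasCut (smallLabels γ r) c ∧ ¬((γ x:ℕ)+1 ≤ r))) := by
      rw [← card_union_of_disjoint]
      · congr 1
        ext γ
        have hmem : LTree.labelOf c ∈ smallLabels γ r ↔ ((γ x : ℕ)+1 ≤ r) := by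
          simp [smallLabels, hx]
        simp only [mem_union, mem_filter, mem_univ, true_and, hQc, hmem]
        tauto
      · rw [Finset.disjoint_left]
        intro γ hγ1 hγ2
        simp only [mem_filter, mem_univ, true_and] at hγ1 hγ2
        tauto
    -- real arithmetic
    set a : ℕ := #(univ.filter (fun γ : L → Fin n => True ∧ ((γ x : ℕ)+1 ≤ r))) with hadef
    set b : ℕ := #(univ.filter (fun γ : L → Fin n =>
      LTree.hasCut (smallLabels γ r) c ∧ ¬((γ x:ℕ)+1 ≤ r))) with hbdef
    set e : ℕ := #(univ.filter (fun γ : L → Fin n => LTree.hasCut (smallLabels γ r) c))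
      with hedef
    have ha : (a:ℝ) * n = (n:ℝ)^m * r := by exact_mod_cast h1
    have hb : (b:ℝ) * n = (e:ℝ) * ((n:ℝ) - r) := by
      have : (b:ℝ) * n = (e:ℝ) * (((n - r : ℕ)):ℝ) := by exact_mod_cast h2
      rwa [Nat.cast_sub hrn] at this
    have hφe : φprev * ((n:ℝ)^m) ≤ e := by
      have := hchild c hc
      rw [hcut_eq c] at this
      rw [← le_div_iff₀ hN]
      exact this
    rw [hsplit]
    push_cast
    rw [le_div_iff₀ hN]
    have hnr0 : (0:ℝ) ≤ (n:ℝ) - r := by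
      have : (r:ℝ) ≤ n := by exact_mod_cast hrn
      linarith
    have hpn : p * n = r := by rw [hp]; field_simp
    refine le_of_mul_le_mul_right ?_ hn'
    have e1 : xval * (n:ℝ)^m * n = (r:ℝ) * (n:ℝ)^m + ((n:ℝ) - r) * (φprev * (n:ℝ)^m) := by
      have h' : xval * (n:ℝ)^m * n = (p*n)*(n:ℝ)^m + ((n:ℝ) - p*n)*(φprev*(n:ℝ)^m) := by
        rw [hxval]; ring
      rw [h', hpn]
    rw [e1]
    have h3 := mul_le_mul_of_nonneg_left hφe hnr0
    nlinarith [ha, hb, h3]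
  -- Harris for the conjunction over children
  have hprodle : ∀ l : List (LTree L),
      (l.map (fun c => (#(univ.filter (Qc c)) : ℝ) / (n:ℝ)^m)).prod ≤
        (#(univ.filter (fun γ : L → Fin n => ∀ c ∈ l, Qc c γ)) : ℝ) / (n:ℝ)^m := by
    intro l
    induction l with
    | nil =>
      simp only [List.map_nil, List.prod_nil]
      rw [show (univ.filter (fun γ : L → Fin n => ∀ c ∈ ([]:List (LTree L)), Qc c γ)) = univ
        by simp]
      rw [card_univ, Fintype.card_fun, Fintype.card_fin]
      rw [Nat.cast_pow, div_self (by positivity)]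
    | cons a l ih =>
      simp only [List.map_cons, List.prod_cons]
      have hH := harris_pr hn (Qc a) (fun γ => ∀ c ∈ l, Qc c γ) (hQdec a)
        (fun γ γ' hle h c hc => hQdec c γ γ' hle (h c hc))
      calc ((#(univ.filter (Qc a)) : ℝ) / (n:ℝ)^m) *
            (l.map (fun c => (#(univ.filter (Qc c)) : ℝ) / (n:ℝ)^m)).prod
          ≤ ((#(univ.filter (Qc a)) : ℝ) / (n:ℝ)^m) *
            ((#(univ.filter (fun γ : L → Fin n => ∀ c ∈ l, Qc c γ)) : ℝ) / (n:ℝ)^m) :=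
            mul_le_mul_of_nonneg_left ih (by positivity)
        _ ≤ (#(univ.filter (fun γ : L → Fin n => Qc a γ ∧ ∀ c ∈ l, Qc c γ)) : ℝ) / (n:ℝ)^m :=
            hH
        _ = (#(univ.filter (fun γ : L → Fin n => ∀ c ∈ a :: l, Qc c γ)) : ℝ) / (n:ℝ)^m := by
            congr 1
            norm_cast
            congr 1
            apply filter_congr
            intro γ _
            simp [List.forall_mem_cons]
  -- power bound on the product
  have hpow : ∀ l : List (LTree L), (∀ c ∈ l, xval ≤ (#(univ.filter (Qc c)) : ℝ) / (n:ℝ)^m) →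
      xval ^ l.length ≤ (l.map (fun c => (#(univ.filter (Qc c)) : ℝ) / (n:ℝ)^m)).prod := by
    intro l
    induction l with
    | nil => simp
    | cons a l ih =>
      intro h
      simp only [List.map_cons, List.prod_cons, List.length_cons, pow_succ]
      rw [mul_comm (xval ^ l.length) xval]
      exact mul_le_mul (h a List.mem_cons_self) (ih (fun c hc => h c (List.mem_cons_of_mem a hc)))
        (pow_nonneg hx0 _) (hx0.trans (h a List.mem_cons_self))
  -- final chain
  rw [hcut_eq]
  calc xval ^ (k-1) ≤ xval ^ cs.length := pow_le_pow_of_le_one hx0 hx1 hlen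
    _ ≤ (cs.map (fun c => (#(univ.filter (Qc c)) : ℝ) / (n:ℝ)^m)).prod := hpow cs hchildQ
    _ ≤ (#(univ.filter (fun γ : L → Fin n => ∀ c ∈ cs, Qc c γ)) : ℝ) / (n:ℝ)^m := hprodle cs
    _ = (#(univ.filter (fun γ : L → Fin n =>
          LTree.hasCut (smallLabels γ r) (LTree.node y cs))) : ℝ) / (n:ℝ)^m := by
        congr 1
        norm_cast
        congr 1
        apply filter_congr
        intro γ _
        exact (hev γ).symm
end
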